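/- Let n ≥ 2, let κ, b, κ_3, …, κ_n be real numbers with b ≠ 0, and let S be the linear endomorphism of an n-dimensional real vector space defined on a basis (E_1, …, E_n) by S E_1 = κ E_1 + b E_2, S E_2 = −b E_1 + κ E_2, and S E_i = κ_i E_i for i ≥ 3. Set κ_1 = κ_2 = κ. Then the coefficients of the characteristic polynomial det(t·I − S) = Σ_{k=0}^n a_k t^{n−k} are given by a_1 = −Σ_{i=1}^n κ_i and, for every k = 2, …, n, a_k = (−1)^k (μ_k + b² μ_{k−2}^{\{1,2\}}), where μ_k is the k-th elementary symmetric function of κ_1, …, κ_n. -/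

import Mathlib

open Polynomial Matrix Finset


/-- `mu κ J k` is the `k`-th elementary symmetric function of the values `κ i`
with indices `i` outside `J`, with the conventions `mu κ J 0 = 1` and
`mu κ J k = 0` for `k < 0`. -/
noncomputable def mu {n : ℕ} (κ : Fin n → ℝ) (J : Finset (Fin n)) (k : ℤ) : ℝ :=
  if k < 0 then 0
  else ∑ T ∈ (Finset.univ \ J).powersetCard k.toNat, ∏ i ∈ T, κ i


lemma coeff_prod_X_sub_C {n : ℕ} (κ : Fin n → ℝ) (s : Finset (Fin n)) (m : ℕ) (hm : m ≤ s.card) :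
    (∏ i ∈ s, (X - C (κ i))).coeff (s.card - m) =
      (-1 : ℝ) ^ m * ∑ T ∈ s.powersetCard m, ∏ i ∈ T, κ i := by
  have h1 : (∏ i ∈ s, (X - C (κ i))) = ((s.val.map κ).map fun t => X - C t).prod := by
    rw [Finset.prod_eq_multiset_prod, Multiset.map_map]
    rfl
  have hcard : Multiset.card (s.val.map κ) = s.card := by simp
  rw [h1, Multiset.prod_X_sub_C_coeff _ (by omega : s.card - m ≤ Multiset.card (s.val.map κ)),
    hcard]
  have : s.card - (s.card - m) = m := by omega
  rw [this, Finset.esymm_map_val]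


set_option maxHeartbeats 1000000 in
lemma charpoly_eq_II
    (V : Type*) [AddCommGroup V] [Module ℝ V] [FiniteDimensional ℝ V]
    (n : ℕ) (hn : 2 ≤ n)
    (κ : Fin n → ℝ) (b : ℝ)
    (hκ : κ ⟨0, by linarith⟩ = κ ⟨1, by linarith⟩)
    (E : Module.Basis (Fin n) ℝ V) (S : V →ₗ[ℝ] V)
    (hS0 : S (E ⟨0, by linarith⟩) = κ ⟨0, by linarith⟩ • E ⟨0, by linarith⟩ + b • E ⟨1, by linarith⟩)
    (hS1 : S (E ⟨1, by linarith⟩) = -b • E ⟨0, by linarith⟩ + κ ⟨0, by linarith⟩ • E ⟨1, by linarith⟩)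
    (hSi : ∀ i : Fin n, 2 ≤ (i : ℕ) → S (E i) = κ i • E i) :
    LinearMap.charpoly S =
      (∏ i, (X - C (κ i))) +
        C (b ^ 2) * ∏ i ∈ Finset.univ \ {⟨0, by linarith⟩, ⟨1, by linarith⟩}, (X - C (κ i)) := by
  set i0 : Fin n := ⟨0, by omega⟩ with hi0
  set i1 : Fin n := ⟨1, by omega⟩ with hi1
  have hne : i0 ≠ i1 := by simp [hi0, hi1, Fin.ext_iff]
  set e : Fin n ≃ Fin 2 ⊕ Fin (n - 2) :=
    (finCongr (by omega : n = 2 + (n - 2))).trans finSumFinEquiv.symm with he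
  have hsymm : ∀ x : Fin 2 ⊕ Fin (n - 2),
      ((e.symm x : Fin n) : ℕ) = Sum.elim (fun a : Fin 2 => (a : ℕ))
        (fun c : Fin (n - 2) => 2 + (c : ℕ)) x := by
    rintro (a | c) <;> simp [he]
  set A : Matrix (Fin 2) (Fin 2) ℝ := !![κ i0, -b; b, κ i0] with hA
  set d : Fin (n - 2) → ℝ := fun j => κ ⟨2 + j, by omega⟩ with hd
  have hM : reindex e e (LinearMap.toMatrix E E S) = fromBlocks A 0 0 (diagonal d) := by
    ext i j
    have key : ∀ i j, (LinearMap.toMatrix E E S) i j = E.repr (S (E j)) i :=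
      fun i j => LinearMap.toMatrix_apply E E S i j
    rcases i with a | c <;> rcases j with a' | c'
    · -- inl inl
      have h0 : e.symm (Sum.inl a') = if (a' : ℕ) = 0 then i0 else i1 := by
        have := hsymm (Sum.inl a')
        fin_cases a' <;> simp_all [Fin.ext_iff]
      have h1 : e.symm (Sum.inl a) = if (a : ℕ) = 0 then i0 else i1 := by
        have := hsymm (Sum.inl a)
        clear h0
        fin_cases a <;> simp_all [Fin.ext_iff]
      fin_cases a <;> fin_cases a' <;>
        simp_all [key, hS0, hS1, Module.Basis.repr_self, Finsupp.single_apply, hne, hne.symm, hA]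
    · -- inl inr
      have h1 : (2 : ℕ) ≤ ((e.symm (Sum.inr c') : Fin n) : ℕ) := by rw [hsymm]; simp
      have h2 : e.symm (Sum.inl a) ≠ e.symm (Sum.inr c') := by
        intro h; exact absurd (e.symm.injective h) (by simp)
      simp [key, hSi _ h1, Module.Basis.repr_self, Finsupp.single_apply, h2.symm, fromBlocks]
    · -- inr inl
      have h0 : e.symm (Sum.inl a') = if (a' : ℕ) = 0 then i0 else i1 := by
        have := hsymm (Sum.inl a')
        fin_cases a' <;> simp_all [Fin.ext_iff]
      have hc0 : e.symm (Sum.inr c) ≠ i0 := by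
        intro h; have := hsymm (Sum.inr c); rw [h] at this; simp [hi0] at this; omega
      have hc1 : e.symm (Sum.inr c) ≠ i1 := by
        intro h; have := hsymm (Sum.inr c); rw [h] at this; simp [hi1] at this; omega
      have hval : ((e.symm (Sum.inr c) : Fin n) : ℕ) = 2 + (c : ℕ) := hsymm (Sum.inr c)
      have e0 : i0 ≠ e.symm (Sum.inr c) := fun h => by
        have := congrArg Fin.val h; rw [hval] at this; omega
      have e1 : (⟨1, by omega⟩ : Fin n) ≠ e.symm (Sum.inr c) := fun h => by
        have := congrArg Fin.val h; rw [hval] at this; omega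
      fin_cases a' <;>
        simp_all [key, hS0, hS1, Module.Basis.repr_self, Finsupp.single_apply, fromBlocks]
    · -- inr inr
      have h1 : (2 : ℕ) ≤ ((e.symm (Sum.inr c') : Fin n) : ℕ) := by rw [hsymm]; simp
      have h3 : e.symm (Sum.inr c') = (⟨2 + (c' : ℕ), by omega⟩ : Fin n) := by
        apply Fin.ext; rw [hsymm]; simp
      have h4 : (e.symm (Sum.inr c') = e.symm (Sum.inr c)) ↔ c' = c := by
        constructor
        · intro h; simpa using e.symm.injective h
        · rintro rfl; rfl
      rw [reindex_apply, submatrix_apply, key, hSi _ h1, _root_.map_smul]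
      simp only [Module.Basis.repr_self, Finsupp.smul_apply, Finsupp.single_apply, smul_eq_mul,
        mul_ite, mul_one, mul_zero, fromBlocks, Sum.elim_inr, of_apply, diagonal_apply]
      by_cases hcc : c' = c
      · subst hcc
        rw [if_pos rfl, if_pos rfl, h3, hd]
      · rw [if_neg (fun h => hcc (h4.mp h)), if_neg (fun h => hcc h.symm)]
  have step1 : LinearMap.charpoly S = A.charpoly * (diagonal d).charpoly := by
    rw [← LinearMap.charpoly_toMatrix S E, ← Matrix.charpoly_reindex e, hM,
      charpoly_fromBlocks_zero₂₁]
  have hAc : A.charpoly = (X - C (κ i0)) ^ 2 + C (b ^ 2) := by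
    rw [Matrix.charpoly, Matrix.det_fin_two]
    simp only [charmatrix_apply, scalar_apply, diagonal_apply, Matrix.map_apply, hA]
    norm_num
    ring
  have hDc : (diagonal d).charpoly = ∏ j, (X - C (d j)) := by
    have : charmatrix (diagonal d) = diagonal (fun j => X - C (d j)) := by
      ext i j
      by_cases h : i = j <;> simp [charmatrix_apply, diagonal_apply, h]
    rw [Matrix.charpoly, this, det_diagonal]
  have hval2 : ∀ x : Fin n, x ∈ Finset.univ \ {i0, i1} → 2 ≤ (x : ℕ) := by
    intro x hx
    simp only [Finset.mem_sdiff, Finset.mem_insert, Finset.mem_singleton, Finset.mem_univ,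
      true_and, not_or] at hx
    rcases hx with ⟨h0, h1⟩
    rcases x with ⟨x, hxlt⟩
    have h0' : x ≠ 0 := fun h => h0 (by rw [hi0]; exact Fin.ext h)
    have h1' : x ≠ 1 := fun h => h1 (by rw [hi1]; exact Fin.ext h)
    show 2 ≤ x
    omega
  have hprod : ∏ j, (X - C (d j)) = ∏ i ∈ Finset.univ \ {i0, i1}, (X - C (κ i)) := by
    refine Finset.prod_nbij (fun j => (⟨2 + (j : ℕ), by omega⟩ : Fin n)) ?_ ?_ ?_ ?_
    · intro j _
      simp only [Finset.mem_sdiff, Finset.mem_insert, Finset.mem_singleton, Finset.mem_univ,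
        true_and, not_or, hi0, hi1, Ne, Fin.mk.injEq]
      omega
    · intro x _ y _ h
      have := congrArg Fin.val h
      simp only at this
      exact Fin.ext (by omega)
    · intro x hx
      simp only [Finset.coe_sdiff, Set.mem_diff] at hx
      have h2 : 2 ≤ (x : ℕ) := by
        apply hval2
        simp only [Finset.mem_sdiff, Finset.mem_univ, true_and]
        simpa using hx.2
      refine ⟨⟨(x : ℕ) - 2, by omega⟩, by simp, ?_⟩
      exact Fin.ext (by simp; omega)
    · intro j _; simp [hd]
  have hfull : (X - C (κ i0)) ^ 2 * ∏ i ∈ Finset.univ \ {i0, i1}, (X - C (κ i)) =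
      ∏ i, (X - C (κ i)) := by
    rw [← Finset.prod_sdiff (Finset.subset_univ {i0, i1}), Finset.prod_pair hne, ← hκ, mul_comm]
    ring
  rw [step1, hAc, hDc, hprod, add_mul, hfull]



/-- Coefficients of the characteristic polynomial of a shape operator of type II:
`S E_1 = κ E_1 + b E_2`, `S E_2 = −b E_1 + κ E_2`, `S E_i = κ_i E_i` for `i ≥ 3`
(indices `0`, `1` and `i ≥ 2` in the `Fin n` indexing, with `κ_1 = κ_2 = κ`).
Then `a_1 = −Σ κ_i` and `a_k = (−1)^k (μ_k + b² μ_{k−2}^{{1,2}})` for `2 ≤ k ≤ n`. -/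
theorem charpoly_coeff_type_II
    (V : Type*) [AddCommGroup V] [Module ℝ V] [FiniteDimensional ℝ V]
    (n : ℕ) (hn : 2 ≤ n)
    (κ : Fin n → ℝ) (b : ℝ) (hb : b ≠ 0)
    (hκ : κ ⟨0, by omega⟩ = κ ⟨1, by omega⟩)
    (E : Module.Basis (Fin n) ℝ V)
    (S : V →ₗ[ℝ] V)
    (hS0 : S (E ⟨0, by omega⟩) = κ ⟨0, by omega⟩ • E ⟨0, by omega⟩ + b • E ⟨1, by omega⟩)
    (hS1 : S (E ⟨1, by omega⟩) = -b • E ⟨0, by omega⟩ + κ ⟨0, by omega⟩ • E ⟨1, by omega⟩)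
    (hSi : ∀ i : Fin n, 2 ≤ (i : ℕ) → S (E i) = κ i • E i)
    (a : ℕ → ℝ) (ha : ∀ k, a k = (LinearMap.charpoly S).coeff (n - k)) :
    a 1 = -∑ i, κ i ∧
    ∀ k, 2 ≤ k → k ≤ n →
      a k = (-1 : ℝ) ^ k *
        (mu κ ∅ (k : ℤ) + b ^ 2 * mu κ {⟨0, by omega⟩, ⟨1, by omega⟩} ((k : ℤ) - 2)) := by
  obtain ⟨s2, hs2⟩ : ∃ s : Finset (Fin n), s = {⟨0, by omega⟩, ⟨1, by omega⟩} := ⟨_, rfl⟩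
  have hch := charpoly_eq_II V n hn κ b hκ E S hS0 hS1 hSi
  rw [← hs2] at hch
  have hne : (⟨0, by omega⟩ : Fin n) ≠ ⟨1, by omega⟩ := by
    intro h; exact absurd (congrArg Fin.val h) (by simp)
  have hcardu : (Finset.univ : Finset (Fin n)).card = n := by simp
  have hcard2 : ((Finset.univ : Finset (Fin n)) \ s2).card = n - 2 := by
    rw [Finset.card_sdiff_of_subset (Finset.subset_univ _), hs2, Finset.card_pair hne, hcardu]
  have hr0 : ∀ m, n - 2 < m →
      (∏ i ∈ Finset.univ \ s2, (X - C (κ i))).coeff m = 0 := by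
    intro m hm
    apply coeff_eq_zero_of_natDegree_lt
    calc (∏ i ∈ Finset.univ \ s2, (X - C (κ i))).natDegree
        ≤ ∑ i ∈ Finset.univ \ s2, (X - C (κ i)).natDegree := Polynomial.natDegree_prod_le _ _
      _ ≤ n - 2 := by
          simp only [natDegree_X_sub_C, Finset.sum_const, smul_eq_mul, mul_one, hcard2, le_refl]
      _ < m := hm
  constructor
  · rw [ha 1, hch, coeff_add, coeff_C_mul, hr0 (n - 1) (by omega)]
    have h1 : (∏ i, (X - C (κ i))).coeff (n - 1) =
        (-1 : ℝ) ^ 1 * ∑ T ∈ (Finset.univ : Finset (Fin n)).powersetCard 1, ∏ i ∈ T, κ i := by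
      have := coeff_prod_X_sub_C κ Finset.univ 1 (by omega)
      rwa [hcardu] at this
    have h2 : ∑ T ∈ (Finset.univ : Finset (Fin n)).powersetCard 1, ∏ i ∈ T, κ i = ∑ i, κ i := by
      rw [Finset.powersetCard_one, Finset.sum_map]
      simp
    rw [h1, h2]
    ring
  · intro k hk2 hkn
    rw [ha k, hch, coeff_add, coeff_C_mul, ← hs2]
    have hfull : (∏ i, (X - C (κ i))).coeff (n - k) =
        (-1 : ℝ) ^ k * ∑ T ∈ (Finset.univ : Finset (Fin n)).powersetCard k, ∏ i ∈ T, κ i := by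
      have := coeff_prod_X_sub_C κ Finset.univ k (by omega)
      rwa [hcardu] at this
    have hrc : (∏ i ∈ Finset.univ \ s2, (X - C (κ i))).coeff (n - k) =
        (-1 : ℝ) ^ (k - 2) * ∑ T ∈ ((Finset.univ : Finset (Fin n)) \ s2).powersetCard (k - 2),
            ∏ i ∈ T, κ i := by
      have := coeff_prod_X_sub_C κ (Finset.univ \ s2) (k - 2) (by omega)
      rw [hcard2] at this
      have hnk : n - k = n - 2 - (k - 2) := by omega
      rw [hnk]
      exact this
    have hmu1 : mu κ ∅ (k : ℤ) =
        ∑ T ∈ (Finset.univ : Finset (Fin n)).powersetCard k, ∏ i ∈ T, κ i := by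
      rw [mu, if_neg (by omega)]
      simp
    have hmu2 : mu κ s2 ((k : ℤ) - 2) =
        ∑ T ∈ ((Finset.univ : Finset (Fin n)) \ s2).powersetCard (k - 2), ∏ i ∈ T, κ i := by
      rw [mu, if_neg (by omega)]
      have : ((k : ℤ) - 2).toNat = k - 2 := by omega
      rw [this]
    have hsign : ((-1 : ℝ)) ^ (k - 2) = (-1) ^ k := by
      have h : k - 2 + 2 = k := by omega
      rw [← h, pow_add]
      norm_num
    rw [hfull, hrc, hmu1, hmu2, hsign]
    ring
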